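/- Every nonzero function in the dual subspace (P^n_{(p-1)d})^⊥ = P^n_{(p-1)n-(p-1)d-1} has support size at least p^d. Consequently, for any set X of p^d - 1 points in F_p^n and any function f : X → F_p, there exists a polynomial q of degree at most (p-1)d (with individual degrees at most p-1) that agrees with f on all points of X. -/

import Mathlib

open scoped BigOperators

noncomputable section

/-- The set of functions `F_p^n → F_p` computed by polynomials of total degree at most `d`
with individual degrees at most `p - 1`. -/
def PolyFns (p n d : ℕ) : Set ((Fin n → ZMod p) → ZMod p) :=
  {f | ∃ P : MvPolynomial (Fin n) (ZMod p),
    P.totalDegree ≤ d ∧ (∀ i, P.degreeOf i ≤ p - 1) ∧ ∀ x, MvPolynomial.eval x P = f x}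

/-- Inner product `⟨f,g⟩ = Σ_x f(x)·g(x)` on functions `F_p^n → F_p`. -/
def dotF {p n : ℕ} [NeZero p] (f g : (Fin n → ZMod p) → ZMod p) : ZMod p :=
  ∑ x : Fin n → ZMod p, f x * g x

/-- The dual of a set of functions under the inner product `dotF`. -/
def dualSet {p n : ℕ} [NeZero p] (S : Set ((Fin n → ZMod p) → ZMod p)) :
    Set ((Fin n → ZMod p) → ZMod p) :=
  {g | ∀ f ∈ S, dotF g f = 0}

open MvPolynomial

/-- reduced exponent: `x ^ m = x ^ erExp p m` on `ZMod p`, with `erExp p m ≤ min m (p-1)`. -/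
def erExp (p m : ℕ) : ℕ := if m = 0 then 0 else (m - 1) % (p - 1) + 1

lemma erExp_le_self (p m : ℕ) : erExp p m ≤ m := by
  unfold erExp; split
  · simp [*]
  · have h1 : 1 ≤ m := Nat.one_le_iff_ne_zero.2 ‹_›
    have := Nat.mod_le (m - 1) (p - 1)
    omega

lemma erExp_le (p m : ℕ) (hp : 2 ≤ p) : erExp p m ≤ p - 1 := by
  unfold erExp; split
  · omega
  · have := Nat.mod_lt (m - 1) (show 0 < p - 1 by omega)
    omega

lemma pow_erExp (p : ℕ) (hp : p.Prime) (m : ℕ) (x : ZMod p) : x ^ erExp p m = x ^ m := by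
  haveI : Fact p.Prime := ⟨hp⟩
  unfold erExp
  split
  · simp [*]
  · rename_i hm
    by_cases hx : x = 0
    · subst hx
      rw [zero_pow (by omega), zero_pow hm]
    · have h1 : x ^ (p - 1) = 1 := ZMod.pow_card_sub_one_eq_one hx
      have hm1 : m = (p - 1) * ((m - 1) / (p - 1)) + ((m - 1) % (p - 1) + 1) := by
        have := Nat.div_add_mod (m - 1) (p - 1)
        omega
      have h2 : x ^ m = x ^ ((p - 1) * ((m - 1) / (p - 1))) * x ^ ((m - 1) % (p - 1) + 1) := by
        rw [← pow_add, ← hm1]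
      rw [h2, pow_mul, h1, one_pow, one_mul]

lemma exists_reduced (p n : ℕ) (hp : p.Prime) (P : MvPolynomial (Fin n) (ZMod p)) :
    ∃ Q : MvPolynomial (Fin n) (ZMod p), Q.totalDegree ≤ P.totalDegree ∧
      (∀ i, Q.degreeOf i ≤ p - 1) ∧ ∀ x, eval x Q = eval x P := by
  classical
  set red : (Fin n →₀ ℕ) → (Fin n →₀ ℕ) :=
    fun a => Finsupp.mapRange (erExp p) (by simp [erExp]) a with hred
  refine ⟨∑ a ∈ P.support, monomial (red a) (P.coeff a), ?_, ?_, ?_⟩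
  · refine le_trans (totalDegree_finset_sum _ _) (Finset.sup_le fun a ha => ?_)
    refine le_trans ?_ (le_totalDegree ha)
    by_cases hc : P.coeff a = 0
    · simp [hc]
    · rw [totalDegree_monomial _ hc]
      rw [Finsupp.sum_fintype _ _ (fun _ => rfl), Finsupp.sum_fintype _ _ (fun _ => rfl)]
      exact Finset.sum_le_sum fun i _ => by
        simpa [hred, Finsupp.mapRange_apply] using erExp_le_self p (a i)
  · intro i
    refine le_trans (degreeOf_sum_le _ _ _) (Finset.sup_le fun a ha => ?_)
    by_cases hc : P.coeff a = 0
    · simp [hc]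
    · rw [degreeOf_monomial_eq _ _ hc]
      simpa [hred, Finsupp.mapRange_apply] using erExp_le p (a i) hp.two_le
  · intro x
    rw [eval_eq' x P, map_sum]
    refine Finset.sum_congr rfl fun a ha => ?_
    rw [eval_monomial, Finsupp.prod_pow]
    congr 1
    refine Finset.prod_congr rfl fun i _ => ?_
    simpa [hred, Finsupp.mapRange_apply] using pow_erExp p hp (a i) (x i)

lemma exists_goodRows (p n : ℕ) (hp : p.Prime) [NeZero p] :
    ∀ (d : ℕ) (T : Finset (Fin n → ZMod p)), (0 : Fin n → ZMod p) ∉ T → T.card < p ^ d →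
    ∃ M : Fin d → Fin n → ZMod p, ∀ y ∈ T, ∃ j, ∑ i, M j i * y i ≠ 0 := by
  classical
  haveI : Fact p.Prime := ⟨hp⟩
  intro d
  induction d with
  | zero =>
    intro T h0 hT
    have h1 : T.card < 1 := by simpa using hT
    have : T = ∅ := Finset.card_eq_zero.mp (by omega)
    exact ⟨fun _ => 0, by simp [this]⟩
  | succ d ih =>
    intro T h0 hT
    rcases T.eq_empty_or_nonempty with rfl | hne
    · exact ⟨fun _ => 0, by simp⟩
    obtain ⟨y0, hy0⟩ := hne
    have hn : 0 < n := by
      rcases Nat.eq_zero_or_pos n with hn | hn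
      · subst hn
        exact absurd (show y0 = 0 from funext fun i => i.elim0) (fun e => h0 (e ▸ hy0))
      · exact hn
    have key : ∀ y ∈ T,
        (Finset.univ.filter fun v : Fin n → ZMod p => ∑ i, v i * y i = 0).card ≤ p ^ (n - 1) := by
      intro y hy
      have hyne : y ≠ 0 := fun h => h0 (h ▸ hy)
      obtain ⟨i0, hi0⟩ : ∃ i0, y i0 ≠ 0 := by
        by_contra h; push_neg at h; exact hyne (funext h)
      have hinj : Set.InjOn (fun v : Fin n → ZMod p => fun i : {i : Fin n // i ≠ i0} => v i)
          (Finset.univ.filter fun v : Fin n → ZMod p => ∑ i, v i * y i = 0) := by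
        intro v hv w hw hvw
        simp only [Finset.coe_filter, Set.mem_setOf_eq, Finset.mem_univ, true_and] at hv hw
        funext i
        by_cases hi : i = i0
        · rw [hi]
          have hv' : v i0 * y i0 + ∑ i ∈ Finset.univ.erase i0, v i * y i = 0 := by
            rw [Finset.add_sum_erase _ (fun i => v i * y i) (Finset.mem_univ i0)]; exact hv
          have hw' : w i0 * y i0 + ∑ i ∈ Finset.univ.erase i0, w i * y i = 0 := by
            rw [Finset.add_sum_erase _ (fun i => w i * y i) (Finset.mem_univ i0)]; exact hw
          have hsum : ∑ i ∈ Finset.univ.erase i0, v i * y i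
              = ∑ i ∈ Finset.univ.erase i0, w i * y i := by
            refine Finset.sum_congr rfl fun i hi => ?_
            have : v i = w i := congrFun hvw ⟨i, (Finset.mem_erase.mp hi).1⟩
            rw [this]
          have hvw0 : v i0 * y i0 = w i0 * y i0 := by
            have := hv'.trans hw'.symm
            rw [hsum] at this
            exact add_right_cancel this
          exact mul_right_cancel₀ hi0 hvw0
        · exact congrFun hvw ⟨i, hi⟩
      have hmaps : ∀ v ∈ (Finset.univ.filter fun v : Fin n → ZMod p => ∑ i, v i * y i = 0),
          (fun i : {i : Fin n // i ≠ i0} => v i) ∈ (Finset.univ : Finset ({i : Fin n // i ≠ i0} → ZMod p)) :=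
        fun _ _ => Finset.mem_univ _
      have := Finset.card_le_card_of_injOn _ hmaps hinj
      calc (Finset.univ.filter fun v : Fin n → ZMod p => ∑ i, v i * y i = 0).card
          ≤ (Finset.univ : Finset ({i : Fin n // i ≠ i0} → ZMod p)).card := this
        _ = p ^ (n - 1) := by
            rw [Finset.card_univ, Fintype.card_fun, ZMod.card]
            congr 1
            have h1 : Fintype.card {i : Fin n // i = i0} = 1 := Fintype.card_subtype_eq i0
            have := Fintype.card_subtype_compl (fun i : Fin n => i = i0)
            rw [h1, Fintype.card_fin] at this
            exact this
    have havg : ∑ v : Fin n → ZMod p, (T.filter fun y => ∑ i, v i * y i = 0).card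
        ≤ T.card * p ^ (n - 1) := by
      have hswap : ∑ v : Fin n → ZMod p, (T.filter fun y => ∑ i, v i * y i = 0).card
          = ∑ y ∈ T, (Finset.univ.filter fun v : Fin n → ZMod p => ∑ i, v i * y i = 0).card := by
        simp only [Finset.card_filter]
        rw [Finset.sum_comm]
      rw [hswap]
      calc ∑ y ∈ T, (Finset.univ.filter fun v : Fin n → ZMod p => ∑ i, v i * y i = 0).card
          ≤ ∑ _y ∈ T, p ^ (n - 1) := Finset.sum_le_sum key
        _ = T.card * p ^ (n - 1) := by rw [Finset.sum_const, smul_eq_mul]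
    obtain ⟨v0, -, hv0⟩ := Finset.exists_min_image Finset.univ
      (fun v : Fin n → ZMod p => (T.filter fun y => ∑ i, v i * y i = 0).card)
      ⟨0, Finset.mem_univ 0⟩
    have hcard : p ^ n * (T.filter fun y => ∑ i, v0 i * y i = 0).card ≤ T.card * p ^ (n - 1) := by
      calc p ^ n * (T.filter fun y => ∑ i, v0 i * y i = 0).card
          = ∑ _v : Fin n → ZMod p, (T.filter fun y => ∑ i, v0 i * y i = 0).card := by
            rw [Finset.sum_const, Finset.card_univ, Fintype.card_fun, ZMod.card,
              Fintype.card_fin, smul_eq_mul]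
        _ ≤ ∑ v : Fin n → ZMod p, (T.filter fun y => ∑ i, v i * y i = 0).card :=
            Finset.sum_le_sum fun v _ => hv0 v (Finset.mem_univ v)
        _ ≤ T.card * p ^ (n - 1) := havg
    have hlt : (T.filter fun y => ∑ i, v0 i * y i = 0).card < p ^ d := by
      have h1 : T.card * p ^ (n - 1) < p ^ (d + 1) * p ^ (n - 1) :=
        (Nat.mul_lt_mul_right (Nat.pow_pos hp.pos)).mpr hT
      have h2 : p ^ (d + 1) * p ^ (n - 1) = p ^ d * p ^ n := by
        have he : (d + 1) + (n - 1) = d + n := by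
          rw [add_assoc, Nat.add_sub_cancel' hn]
        rw [← pow_add, he, pow_add]
      have h3 : p ^ n * (T.filter fun y => ∑ i, v0 i * y i = 0).card < p ^ n * p ^ d := by
        calc p ^ n * _ ≤ T.card * p ^ (n - 1) := hcard
          _ < p ^ d * p ^ n := h2 ▸ h1
          _ = p ^ n * p ^ d := mul_comm _ _
      exact Nat.lt_of_mul_lt_mul_left h3
    obtain ⟨M', hM'⟩ := ih (T.filter fun y => ∑ i, v0 i * y i = 0)
      (fun h => h0 (Finset.mem_filter.mp h).1) hlt
    refine ⟨Fin.cons v0 M', fun y hy => ?_⟩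
    by_cases hz : ∑ i, v0 i * y i = 0
    · obtain ⟨j, hj⟩ := hM' y (Finset.mem_filter.mpr ⟨hy, hz⟩)
      exact ⟨j.succ, by simpa using hj⟩
    · exact ⟨0, by simpa using hz⟩

lemma exists_indicator (p n d : ℕ) (hp : p.Prime) [NeZero p] (x0 : Fin n → ZMod p)
    (T : Finset (Fin n → ZMod p)) (hx0 : x0 ∉ T) (hT : T.card < p ^ d) :
    ∃ q ∈ PolyFns p n ((p - 1) * d), q x0 = 1 ∧ ∀ y ∈ T, q y = 0 := by
  classical
  haveI : Fact p.Prime := ⟨hp⟩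
  set T' := T.image (fun y => y - x0) with hT'def
  have h0T' : (0 : Fin n → ZMod p) ∉ T' := by
    simp only [hT'def, Finset.mem_image, not_exists]
    rintro y ⟨hy, hy0⟩
    exact hx0 ((sub_eq_zero.mp hy0) ▸ hy)
  have hT'card : T'.card < p ^ d := lt_of_le_of_lt (Finset.card_image_le) hT
  obtain ⟨M, hM⟩ := exists_goodRows p n hp d T' h0T' hT'card
  set φ : Fin d → (Fin n → ZMod p) → ZMod p := fun j w => ∑ i, M j i * w i with hφ
  have hφsub : ∀ j (y : Fin n → ZMod p), φ j (y - x0) = φ j y - φ j x0 := by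
    intro j y
    simp only [hφ, Pi.sub_apply, mul_sub]
    rw [Finset.sum_sub_distrib]
  set A : Fin d → Finset (ZMod p) := fun j => (T.image fun y => φ j y - φ j x0).erase 0 with hA
  set P0 : MvPolynomial (Fin n) (ZMod p) :=
    ∏ j : Fin d, ∏ c ∈ A j, ((∑ i : Fin n, C (M j i) * X i) - C (c + φ j x0)) with hP0
  have heval : ∀ (w : Fin n → ZMod p) c j,
      eval w ((∑ i : Fin n, C (M j i) * X i) - C (c + φ j x0)) = φ j w - (c + φ j x0) := by
    intro w c j
    simp [hφ]
  have hevalP0 : ∀ w, eval w P0 = ∏ j : Fin d, ∏ c ∈ A j, (φ j w - (c + φ j x0)) := by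
    intro w
    rw [hP0, map_prod]
    refine Finset.prod_congr rfl fun j _ => ?_
    rw [map_prod]
    exact Finset.prod_congr rfl fun c _ => heval w c j
  have hP0x0 : eval x0 P0 ≠ 0 := by
    rw [hevalP0]
    rw [Finset.prod_ne_zero_iff]
    intro j _
    rw [Finset.prod_ne_zero_iff]
    intro c hc
    have hc0 : c ≠ 0 := (Finset.mem_erase.mp hc).1
    intro h
    apply hc0
    have : φ j x0 - (c + φ j x0) = -c := by ring
    rw [this] at h
    simpa using h
  have hP0T : ∀ y ∈ T, eval y P0 = 0 := by
    intro y hy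
    obtain ⟨j, hj⟩ := hM (y - x0) (Finset.mem_image_of_mem _ hy)
    have hj' : φ j y - φ j x0 ≠ 0 := by
      rw [← hφsub]
      exact hj
    rw [hevalP0]
    apply Finset.prod_eq_zero (Finset.mem_univ j)
    apply Finset.prod_eq_zero (i := φ j y - φ j x0)
    · rw [hA]
      exact Finset.mem_erase.mpr ⟨hj', Finset.mem_image_of_mem _ hy⟩
    · ring
  have hdeg : P0.totalDegree ≤ (p - 1) * d := by
    rw [hP0]
    refine le_trans (totalDegree_finset_prod _ _) ?_
    have hfac : ∀ j, (∏ c ∈ A j, ((∑ i : Fin n, C (M j i) * X i) - C (c + φ j x0))).totalDegree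
        ≤ p - 1 := by
      intro j
      refine le_trans (totalDegree_finset_prod _ _) ?_
      have h1 : ∀ c ∈ A j,
          ((∑ i : Fin n, C (M j i) * X i) - C (c + φ j x0)).totalDegree ≤ 1 := by
        intro c _
        refine le_trans (totalDegree_sub _ _) ?_
        apply max_le
        · refine le_trans (totalDegree_finset_sum _ _) (Finset.sup_le fun i _ => ?_)
          refine le_trans (totalDegree_mul _ _) ?_
          simp [totalDegree_X]
        · exact le_trans (le_of_eq (totalDegree_C _)) (Nat.zero_le 1)
      calc ∑ c ∈ A j, ((∑ i : Fin n, C (M j i) * X i) - C (c + φ j x0)).totalDegree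
          ≤ ∑ _c ∈ A j, 1 := Finset.sum_le_sum h1
        _ = (A j).card := by simp
        _ ≤ p - 1 := by
            have hsub : A j ⊆ Finset.univ.erase 0 := by
              intro a ha
              exact Finset.mem_erase.mpr ⟨(Finset.mem_erase.mp ha).1, Finset.mem_univ a⟩
            have := Finset.card_le_card hsub
            rwa [Finset.card_erase_of_mem (Finset.mem_univ 0), Finset.card_univ, ZMod.card] at this
    calc ∑ j : Fin d, (∏ c ∈ A j, ((∑ i : Fin n, C (M j i) * X i) - C (c + φ j x0))).totalDegree
        ≤ ∑ _j : Fin d, (p - 1) := Finset.sum_le_sum fun j _ => hfac j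
      _ = (p - 1) * d := by simp [mul_comm]
  obtain ⟨Q, hQd, hQi, hQe⟩ := exists_reduced p n hp P0
  set u := eval x0 P0 with hu
  have hu0 : u ≠ 0 := hP0x0
  refine ⟨fun w => u⁻¹ * eval w Q, ⟨C u⁻¹ * Q, ?_, ?_, fun x => by rw [eval_mul, eval_C]⟩, ?_, ?_⟩
  · refine le_trans (totalDegree_mul _ _) ?_
    simpa using le_trans hQd hdeg
  · intro i
    exact le_trans (degreeOf_C_mul_le _ _ _) (hQi i)
  · show u⁻¹ * eval x0 Q = 1
    rw [hQe x0, ← hu, inv_mul_cancel₀ hu0]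
  · intro y hy
    show u⁻¹ * eval y Q = 0
    rw [hQe y, hP0T y hy, mul_zero]

/-- Every nonzero function in `(P^n_{(p-1)d})^⊥` has support size at least `p^d`;
consequently one can interpolate any function on `p^d - 1` points by a degree-`(p-1)d`
polynomial. -/
theorem min_support_and_interpolation (p n d : ℕ) (hp : p.Prime) [NeZero p]
    (hd : 1 < d) (hdn : d ≤ n) :
    (∀ β ∈ dualSet (PolyFns p n ((p - 1) * d)), β ≠ 0 → p ^ d ≤ {x | β x ≠ 0}.ncard) ∧
    (∀ X : Finset (Fin n → ZMod p), X.card = p ^ d - 1 →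
      ∀ f : (Fin n → ZMod p) → ZMod p,
        ∃ q ∈ PolyFns p n ((p - 1) * d), ∀ x ∈ X, q x = f x) := by
  classical
  constructor
  · intro β hβ hβ0
    by_contra hlt
    push_neg at hlt
    obtain ⟨x0, hx0⟩ : ∃ x0, β x0 ≠ 0 := by
      by_contra h; push_neg at h
      exact hβ0 (funext h)
    have hfin : {x | β x ≠ 0}.Finite := Set.toFinite _
    have hS : hfin.toFinset.card < p ^ d := by
      rwa [Set.ncard_eq_toFinset_card _ hfin] at hlt
    obtain ⟨q, hqP, hq1, hq0⟩ := exists_indicator p n d hp x0 (hfin.toFinset.erase x0)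
      (Finset.notMem_erase _ _)
      (lt_of_le_of_lt (Finset.card_le_card (Finset.erase_subset _ _)) hS)
    have hdot : dotF β q = 0 := hβ q hqP
    have hsum : dotF β q = β x0 := by
      rw [dotF, Finset.sum_eq_single x0]
      · rw [hq1, mul_one]
      · intro x _ hx
        by_cases hβx : β x = 0
        · rw [hβx, zero_mul]
        · rw [hq0 x (Finset.mem_erase.mpr ⟨hx, hfin.mem_toFinset.mpr hβx⟩), mul_zero]
      · intro h; exact absurd (Finset.mem_univ x0) h
    exact hx0 (hsum ▸ hdot)
  · intro X hX f
    have hcard : ∀ x0 : Fin n → ZMod p, (X.erase x0).card < p ^ d := by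
      intro x0
      have h1 : (X.erase x0).card ≤ X.card := Finset.card_erase_le
      have h2 : 0 < p ^ d := Nat.pow_pos hp.pos
      omega
    have H : ∀ x0 : Fin n → ZMod p,
        ∃ q ∈ PolyFns p n ((p - 1) * d), q x0 = 1 ∧ ∀ y ∈ X.erase x0, q y = 0 :=
      fun x0 => exists_indicator p n d hp x0 (X.erase x0) (Finset.notMem_erase _ _) (hcard x0)
    choose qf hqP hq1 hq0 using H
    have HP : ∀ x0 : Fin n → ZMod p, ∃ P : MvPolynomial (Fin n) (ZMod p),
        P.totalDegree ≤ (p - 1) * d ∧ (∀ i, P.degreeOf i ≤ p - 1) ∧ ∀ x, eval x P = qf x0 x :=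
      fun x0 => hqP x0
    choose Pf hPd hPi hPe using HP
    refine ⟨fun x => ∑ x0 ∈ X, f x0 * qf x0 x, ⟨∑ x0 ∈ X, C (f x0) * Pf x0, ?_, ?_, ?_⟩, ?_⟩
    · refine le_trans (totalDegree_finset_sum _ _) (Finset.sup_le fun x0 _ => ?_)
      refine le_trans (totalDegree_mul _ _) ?_
      simpa using hPd x0
    · intro i
      exact le_trans (degreeOf_sum_le _ _ _)
        (Finset.sup_le fun x0 _ => le_trans (degreeOf_C_mul_le _ _ _) (hPi x0 i))
    · intro x
      rw [map_sum]
      exact Finset.sum_congr rfl fun x0 _ => by rw [eval_mul, eval_C, hPe x0 x]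
    · intro x hx
      show ∑ x0 ∈ X, f x0 * qf x0 x = f x
      rw [Finset.sum_eq_single x]
      · rw [hq1 x, mul_one]
      · intro x0 hx0 hx0x
        rw [hq0 x0 x (Finset.mem_erase.mpr ⟨Ne.symm hx0x, hx⟩), mul_zero]
      · intro h; exact absurd hx h
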